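/- For positive integers m and n with n ≥ 2 and m(n-1) ≥ n, the identity C(m(n-1) - 1, n - 1) + 2·C(m(n-1) - 1, n) = ((2m(n-1) - n)/n) · C(m(n-1) - 1, n - 1) holds. -/
import Mathlib


/-- For positive integers `m` and `n` with `n ≥ 2` and `m(n-1) ≥ n`, the identity
`C(m(n-1) - 1, n - 1) + 2·C(m(n-1) - 1, n) = ((2m(n-1) - n)/n) · C(m(n-1) - 1, n - 1)`
holds. -/
theorem stmt18 (m n : ℕ) (hm : 0 < m) (hn : 2 ≤ n) (h : n ≤ m * (n - 1)) :
    (Nat.choose (m * (n - 1) - 1) (n - 1) : ℚ) +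
        2 * (Nat.choose (m * (n - 1) - 1) n : ℚ) =
      ((2 * (m : ℚ) * ((n : ℚ) - 1) - (n : ℚ)) / (n : ℚ)) *
        (Nat.choose (m * (n - 1) - 1) (n - 1) : ℚ) := by
  set N := m * (n - 1) with hN
  have hn1 : n - 1 + 1 = n := by omega
  have key : (N - 1).choose n * n = (N - 1).choose (n - 1) * (N - n) := by
    have := Nat.choose_succ_right_eq (N - 1) (n - 1)
    rw [hn1] at this
    have hs : N - 1 - (n - 1) = N - n := by omega
    rw [hs] at this
    exact this
  have keyQ : ((N - 1).choose n : ℚ) * n = ((N - 1).choose (n - 1) : ℚ) * (N - n) := by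
    exact_mod_cast congrArg (Nat.cast : ℕ → ℚ) key
  have hNQ : (N : ℚ) = m * ((n : ℚ) - 1) := by
    rw [hN]
    push_cast [Nat.cast_sub (by omega : 1 ≤ n)]
    ring
  have hnQ : ((n : ℚ)) ≠ 0 := by positivity
  have hNn : ((N : ℚ)) - n = ((N - n : ℕ) : ℚ) := by
    rw [Nat.cast_sub h]
  field_simp
  nlinarith [keyQ, hNQ]
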